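/- Let n ≥ 1 be a natural number, let z₁,…,z_n be complex numbers with z₁ + ⋯ + z_n = 1, and let s₁,…,s_n be natural numbers. Then Σ_{i=1}^{n} z_i^{s_i+1} · Σ_{(j_k)_{k≠i}, 0 ≤ j_k ≤ s_k for each k≠i} ( (s_i + Σ_{k≠i} j_k)! / (s_i! · ∏_{k≠i} j_k!) ) · ∏_{k≠i} z_k^{j_k} = 1. -/

import Mathlib

open Finset

namespace ZK

variable {α : Type*} [DecidableEq α]

/-- Complex multinomial-type coefficient `(t + Σ_{k∈T} j k)! / (t! ∏_{k∈T} (j k)!)`. -/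
noncomputable def c (t : ℕ) (T : Finset α) (j : α → ℕ) : ℂ :=
  ((t + ∑ k ∈ T, j k).factorial : ℂ) /
    ((t.factorial : ℂ) * ∏ k ∈ T, ((j k).factorial : ℂ))

lemma den_ne_zero (t : ℕ) (T : Finset α) (j : α → ℕ) :
    ((t.factorial : ℂ) * ∏ k ∈ T, ((j k).factorial : ℂ)) ≠ 0 := by
  apply mul_ne_zero
  · exact_mod_cast Nat.cast_ne_zero.mpr (Nat.factorial_ne_zero t)
  · apply Finset.prod_ne_zero_iff.mpr
    intro k _
    exact_mod_cast Nat.cast_ne_zero.mpr (Nat.factorial_ne_zero _)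

lemma c_mul_den (t : ℕ) (T : Finset α) (j : α → ℕ) :
    c t T j * ((t.factorial : ℂ) * ∏ k ∈ T, ((j k).factorial : ℂ))
      = ((t + ∑ k ∈ T, j k).factorial : ℂ) :=
  div_mul_cancel₀ _ (den_ne_zero t T j)

/-- Pascal-type recursion for the coefficient. -/
lemma pascal (t : ℕ) (T : Finset α) (j : α → ℕ) :
    c (t + 1) T j = c t T j +
      ∑ k ∈ T, (if j k = 0 then 0 else c (t + 1) T (Function.update j k (j k - 1))) := by
  set Tot := ∑ k ∈ T, j k with hTot
  set P : ℂ := ∏ k ∈ T, ((j k).factorial : ℂ) with hP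
  have hD : ((t + 1).factorial : ℂ) * P ≠ 0 := den_ne_zero (t + 1) T j
  have hPne : P ≠ 0 := by
    intro h; exact hD (by rw [h, mul_zero])
  rw [show c (t + 1) T j = ((t + 1 + Tot).factorial : ℂ) / (((t + 1).factorial : ℂ) * P) from rfl,
    div_eq_iff hD]
  -- compute each k-term
  have hterm : ∀ k ∈ T, (if j k = 0 then 0 else c (t + 1) T (Function.update j k (j k - 1)))
      = ((j k : ℂ)) * ((t + Tot).factorial : ℂ) / (((t + 1).factorial : ℂ) * P) := by
    intro k hk
    by_cases h0 : j k = 0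
    · simp [h0]
    · simp only [h0, if_false]
      have hT' : Tot = j k + ∑ x ∈ T.erase k, j x := by
        rw [hTot, ← Finset.add_sum_erase T j hk]
      have hsum : ∑ l ∈ T, Function.update j k (j k - 1) l = Tot - 1 := by
        rw [Finset.sum_update_of_mem hk, ← Finset.erase_eq]
        omega
      have hprod : ∏ l ∈ T, (((Function.update j k (j k - 1)) l).factorial : ℂ)
          = ((j k - 1).factorial : ℂ) * ∏ l ∈ T.erase k, ((j l).factorial : ℂ) := by
        rw [← Finset.mul_prod_erase T _ hk, Function.update_self]
        congr 1
        exact Finset.prod_congr rfl fun l hl => by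
          rw [Function.update_of_ne (Finset.ne_of_mem_erase hl)]
      have hTot1 : 1 ≤ Tot := by omega
      have hnum : t + 1 + (Tot - 1) = t + Tot := by omega
      rw [show c (t+1) T (Function.update j k (j k - 1)) = ((t + 1 + ∑ l ∈ T, Function.update j k (j k - 1) l).factorial : ℂ) / (((t+1).factorial : ℂ) * ∏ l ∈ T, (((Function.update j k (j k - 1)) l).factorial : ℂ)) from rfl, hsum, hprod, hnum]
      have hPsplit : P = ((j k).factorial : ℂ) * ∏ l ∈ T.erase k, ((j l).factorial : ℂ) := by
        rw [hP, ← Finset.prod_erase_mul T _ hk]; ring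
      have hfact : ((j k).factorial : ℂ) = (j k : ℂ) * ((j k - 1).factorial : ℂ) := by
        exact_mod_cast (Nat.mul_factorial_pred h0).symm
      rw [hPsplit, hfact]
      have h1 : ((j k - 1).factorial : ℂ) ≠ 0 := Nat.cast_ne_zero.mpr (Nat.factorial_ne_zero _)
      have h2 : (((t+1).factorial : ℂ)) ≠ 0 := Nat.cast_ne_zero.mpr (Nat.factorial_ne_zero _)
      have h3 : (∏ l ∈ T.erase k, ((j l).factorial : ℂ)) ≠ 0 :=
        Finset.prod_ne_zero_iff.mpr fun l _ => Nat.cast_ne_zero.mpr (Nat.factorial_ne_zero _)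
      have hjk : (j k : ℂ) ≠ 0 := Nat.cast_ne_zero.mpr h0
      rw [div_eq_div_iff (mul_ne_zero h2 (mul_ne_zero h1 h3))
        (mul_ne_zero h2 (mul_ne_zero (mul_ne_zero hjk h1) h3))]
      ring
  rw [Finset.sum_congr rfl hterm]
  rw [← Finset.sum_div, ← Finset.sum_mul]
  have hsumcast : ∑ k ∈ T, (j k : ℂ) = (Tot : ℂ) := by rw [hTot]; push_cast; rfl
  rw [hsumcast]
  rw [show c t T j = ((t + Tot).factorial : ℂ) / ((t.factorial : ℂ) * P) from rfl]
  have hfs : ((t + 1 + Tot).factorial : ℂ) = ((t + 1 + Tot : ℕ) : ℂ) * ((t + Tot).factorial : ℂ) := by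
    have : t + 1 + Tot = (t + Tot) + 1 := by omega
    rw [this, Nat.factorial_succ]; push_cast; ring
  rw [hfs]
  have ht : ((t.factorial : ℂ)) ≠ 0 := Nat.cast_ne_zero.mpr (Nat.factorial_ne_zero _)
  have ht1 : (((t+1).factorial : ℂ)) ≠ 0 := Nat.cast_ne_zero.mpr (Nat.factorial_ne_zero _)
  have hfact1 : (((t+1).factorial : ℂ)) = ((t : ℂ) + 1) * (t.factorial : ℂ) := by
    rw [Nat.factorial_succ]; push_cast; ring
  field_simp
  push_cast
  rw [hfact1]
  ring

end ZK

namespace ZK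

variable {n : ℕ}

/-- The box of tuples `j` with `j k ≤ s k` for all `k` and `j i = 0`. -/
def Box (s : Fin n → ℕ) (i : Fin n) : Finset (Fin n → ℕ) :=
  (Fintype.piFinset fun k => Finset.range (s k + 1)).filter (fun j => j i = 0)

lemma mem_Box {s : Fin n → ℕ} {i : Fin n} {j : Fin n → ℕ} :
    j ∈ Box s i ↔ (∀ k, j k ≤ s k) ∧ j i = 0 := by
  simp [Box, Fintype.mem_piFinset, Nat.lt_succ_iff]

/-- The monomial `∏_{k ∈ T} z k ^ j k`. -/
def w (z : Fin n → ℂ) (T : Finset (Fin n)) (j : Fin n → ℕ) : ℂ := ∏ k ∈ T, z k ^ j k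

variable (z : Fin n → ℂ) (s : Fin n → ℕ)

/-- The inner sum with parameter `t` in place of `s m`. -/
noncomputable def G (t : ℕ) (m : Fin n) : ℂ :=
  ∑ j ∈ Box s m, c t (Finset.univ.erase m) j * w z (Finset.univ.erase m) j

/-- The part of `G` where `j k = s k`. -/
noncomputable def S (k : Fin n) (t : ℕ) (m : Fin n) : ℂ :=
  ∑ j ∈ (Box s m).filter (fun j => j k = s k),
    c t (Finset.univ.erase m) j * w z (Finset.univ.erase m) j

lemma reindex (m k : Fin n) (hk : k ≠ m) (t : ℕ) :
    ∑ j ∈ (Box s m).filter (fun j => ¬ j k = 0),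
        c t (Finset.univ.erase m) (Function.update j k (j k - 1)) * w z (Finset.univ.erase m) j
      = z k * ∑ j ∈ (Box s m).filter (fun j => ¬ j k = s k),
          c t (Finset.univ.erase m) j * w z (Finset.univ.erase m) j := by
  rw [Finset.mul_sum]
  refine Finset.sum_nbij' (fun j => Function.update j k (j k - 1))
    (fun j => Function.update j k (j k + 1)) ?_ ?_ ?_ ?_ ?_
  · intro j hj
    beta_reduce
    rw [Finset.mem_filter, mem_Box] at hj ⊢
    obtain ⟨⟨h1, h2⟩, h3⟩ := hj
    refine ⟨⟨fun l => ?_, ?_⟩, ?_⟩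
    · rcases eq_or_ne l k with rfl | hl
      · simp only [Function.update_self]; exact le_trans (Nat.sub_le _ _) (h1 l)
      · rw [Function.update_of_ne hl]; exact h1 l
    · rw [Function.update_of_ne hk.symm]; exact h2
    · simp only [Function.update_self]
      have := h1 k
      omega
  · intro j hj
    beta_reduce
    rw [Finset.mem_filter, mem_Box] at hj ⊢
    obtain ⟨⟨h1, h2⟩, h3⟩ := hj
    refine ⟨⟨fun l => ?_, ?_⟩, ?_⟩
    · rcases eq_or_ne l k with rfl | hl
      · simp only [Function.update_self]
        have := h1 l; omega
      · rw [Function.update_of_ne hl]; exact h1 l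
    · rw [Function.update_of_ne hk.symm]; exact h2
    · simp only [Function.update_self]; omega
  · intro j hj
    beta_reduce
    rw [Finset.mem_filter] at hj
    funext l
    rcases eq_or_ne l k with rfl | hl
    · simp only [Function.update_self]; omega
    · simp [Function.update_of_ne hl]
  · intro j hj
    beta_reduce
    funext l
    rcases eq_or_ne l k with rfl | hl
    · simp only [Function.update_self]; omega
    · simp [Function.update_of_ne hl]
  · intro j hj
    rw [Finset.mem_filter, mem_Box] at hj
    obtain ⟨⟨h1, h2⟩, h3⟩ := hj
    have hkT : k ∈ Finset.univ.erase m := Finset.mem_erase.mpr ⟨hk, Finset.mem_univ k⟩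
    have hw : w z (Finset.univ.erase m) j
        = z k * w z (Finset.univ.erase m) (Function.update j k (j k - 1)) := by
      rw [w, w, ← Finset.mul_prod_erase _ _ hkT, ← Finset.mul_prod_erase _ _ hkT,
        Function.update_self]
      have : z k ^ j k = z k * z k ^ (j k - 1) := by
        conv_lhs => rw [show j k = (j k - 1) + 1 by omega]
        rw [pow_succ]; ring
      rw [this]
      have : ∏ l ∈ (Finset.univ.erase m).erase k, z l ^ j l
          = ∏ l ∈ (Finset.univ.erase m).erase k, z l ^ (Function.update j k (j k - 1)) l :=
        Finset.prod_congr rfl fun l hl => by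
          rw [Function.update_of_ne (Finset.ne_of_mem_erase hl)]
      rw [this]; ring
    rw [hw]
    have hupd : Function.update (Function.update j k (j k - 1)) k (Function.update j k (j k - 1) k + 1) = j := by
      funext l
      rcases eq_or_ne l k with rfl | hl
      · simp only [Function.update_self]; omega
      · simp [Function.update_of_ne hl]
    ring

end ZK

namespace ZK
variable {n : ℕ} (z : Fin n → ℂ) (s : Fin n → ℕ)

lemma star (hz : ∑ i, z i = 1) (m : Fin n) (t : ℕ) :
    z m * G z s (t + 1) m
      = G z s t m - ∑ k ∈ Finset.univ.erase m, z k * S z s k (t + 1) m := by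
  have key : G z s (t + 1) m = G z s t m
      + ∑ k ∈ Finset.univ.erase m,
          (z k * (G z s (t + 1) m - S z s k (t + 1) m)) := by
    conv_lhs => rw [G]
    have hsplit : ∀ j ∈ Box s m,
        c (t + 1) (Finset.univ.erase m) j * w z (Finset.univ.erase m) j
          = c t (Finset.univ.erase m) j * w z (Finset.univ.erase m) j
            + ∑ k ∈ Finset.univ.erase m,
                (if j k = 0 then 0
                  else c (t + 1) (Finset.univ.erase m) (Function.update j k (j k - 1)))
                  * w z (Finset.univ.erase m) j := by
      intro j _
      rw [pascal, add_mul, Finset.sum_mul]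
    rw [Finset.sum_congr rfl hsplit, Finset.sum_add_distrib]
    congr 1
    rw [Finset.sum_comm]
    refine Finset.sum_congr rfl fun k hk => ?_
    have hkm : k ≠ m := (Finset.mem_erase.mp hk).1
    have h1 : ∑ j ∈ Box s m,
        (if j k = 0 then 0
          else c (t + 1) (Finset.univ.erase m) (Function.update j k (j k - 1)))
          * w z (Finset.univ.erase m) j
        = ∑ j ∈ (Box s m).filter (fun j => ¬ j k = 0),
            c (t + 1) (Finset.univ.erase m) (Function.update j k (j k - 1))
              * w z (Finset.univ.erase m) j := by
      rw [Finset.sum_filter]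
      refine Finset.sum_congr rfl fun j _ => ?_
      by_cases h : j k = 0 <;> simp [h]
    rw [h1, reindex z s m k hkm (t + 1)]
    have h2 : ∑ j ∈ (Box s m).filter (fun j => ¬ j k = s k),
        c (t + 1) (Finset.univ.erase m) j * w z (Finset.univ.erase m) j
        = G z s (t + 1) m - S z s k (t + 1) m := by
      rw [G, S, ← Finset.sum_filter_add_sum_filter_not (Box s m) (fun j => j k = s k)]
      ring
    rw [h2]
  have hzsum : ∑ k ∈ Finset.univ.erase m, z k = 1 - z m := by
    have := Finset.add_sum_erase Finset.univ z (Finset.mem_univ m)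
    rw [hz] at this
    linear_combination this
  have expand : ∑ k ∈ Finset.univ.erase m,
      (z k * (G z s (t + 1) m - S z s k (t + 1) m))
      = (1 - z m) * G z s (t + 1) m - ∑ k ∈ Finset.univ.erase m, z k * S z s k (t + 1) m := by
    rw [← hzsum, Finset.sum_mul, ← Finset.sum_sub_distrib]
    refine Finset.sum_congr rfl fun k _ => by ring
  rw [expand] at key
  linear_combination key
end ZK

namespace ZK
variable {n : ℕ} (z : Fin n → ℂ) (s : Fin n → ℕ)

lemma Box_update (m : Fin n) (t : ℕ) : Box (Function.update s m t) m = Box s m := by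
  ext j
  simp only [mem_Box]
  constructor
  · rintro ⟨h1, h2⟩
    refine ⟨fun k => ?_, h2⟩
    rcases eq_or_ne k m with rfl | hk
    · omega
    · have := h1 k; rwa [Function.update_of_ne hk] at this
  · rintro ⟨h1, h2⟩
    refine ⟨fun k => ?_, h2⟩
    rcases eq_or_ne k m with rfl | hk
    · rw [Function.update_self]; omega
    · rw [Function.update_of_ne hk]; exact h1 k

lemma Box_update_ne (m i : Fin n) (him : i ≠ m) (hm : 1 ≤ s m) :
    Box (Function.update s m (s m - 1)) i = (Box s i).filter (fun j => ¬ j m = s m) := by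
  ext j
  simp only [mem_Box, Finset.mem_filter]
  constructor
  · rintro ⟨h1, h2⟩
    have hjm := h1 m
    rw [Function.update_self] at hjm
    refine ⟨⟨fun k => ?_, h2⟩, by omega⟩
    rcases eq_or_ne k m with rfl | hk
    · omega
    · have := h1 k; rwa [Function.update_of_ne hk] at this
  · rintro ⟨⟨h1, h2⟩, h3⟩
    refine ⟨fun k => ?_, h2⟩
    rcases eq_or_ne k m with rfl | hk
    · rw [Function.update_self]; have := h1 k; omega
    · rw [Function.update_of_ne hk]; exact h1 k

lemma cross (m i : Fin n) (him : i ≠ m) :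
    z i ^ (s i + 1) *
        ∑ j ∈ (Box s i).filter (fun j => j m = s m),
          c (s i) (Finset.univ.erase i) j * w z (Finset.univ.erase i) j
      = z m ^ s m * (z i *
        ∑ j ∈ (Box s m).filter (fun j => j i = s i),
          c (s m) (Finset.univ.erase m) j * w z (Finset.univ.erase m) j) := by
  simp only [Finset.mul_sum]
  refine Finset.sum_nbij' (fun j => Function.update (Function.update j m 0) i (s i))
    (fun j => Function.update (Function.update j i 0) m (s m)) ?_ ?_ ?_ ?_ ?_
  · intro j hj
    beta_reduce
    rw [Finset.mem_filter, mem_Box] at hj ⊢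
    obtain ⟨⟨h1, h2⟩, h3⟩ := hj
    refine ⟨⟨fun k => ?_, ?_⟩, ?_⟩
    · rcases eq_or_ne k i with rfl | hki
      · rw [Function.update_self]
      · rw [Function.update_of_ne hki]
        rcases eq_or_ne k m with rfl | hkm
        · rw [Function.update_self]; omega
        · rw [Function.update_of_ne hkm]; exact h1 k
    · rw [Function.update_of_ne him.symm, Function.update_self]
    · rw [Function.update_self]
  · intro j hj
    beta_reduce
    rw [Finset.mem_filter, mem_Box] at hj ⊢
    obtain ⟨⟨h1, h2⟩, h3⟩ := hj
    refine ⟨⟨fun k => ?_, ?_⟩, ?_⟩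
    · rcases eq_or_ne k m with rfl | hkm
      · rw [Function.update_self]
      · rw [Function.update_of_ne hkm]
        rcases eq_or_ne k i with rfl | hki
        · rw [Function.update_self]; omega
        · rw [Function.update_of_ne hki]; exact h1 k
    · rw [Function.update_of_ne him, Function.update_self]
    · rw [Function.update_self]
  · intro j hj
    beta_reduce
    rw [Finset.mem_filter, mem_Box] at hj
    obtain ⟨⟨h1, h2⟩, h3⟩ := hj
    funext k
    by_cases hkm : k = m
    · rw [hkm, Function.update_self, h3]
    · rw [Function.update_of_ne hkm]
      by_cases hki : k = i
      · rw [hki, Function.update_self, h2]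
      · rw [Function.update_of_ne hki, Function.update_of_ne hki, Function.update_of_ne hkm]
  · intro j hj
    beta_reduce
    rw [Finset.mem_filter, mem_Box] at hj
    obtain ⟨⟨h1, h2⟩, h3⟩ := hj
    funext k
    by_cases hki : k = i
    · rw [hki, Function.update_self, h3]
    · rw [Function.update_of_ne hki]
      by_cases hkm : k = m
      · rw [hkm, Function.update_self, h2]
      · rw [Function.update_of_ne hkm, Function.update_of_ne hkm, Function.update_of_ne hki]
  · intro j hj
    beta_reduce
    rw [Finset.mem_filter, mem_Box] at hj
    obtain ⟨⟨h1, h2⟩, h3⟩ := hj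
    set j' := Function.update (Function.update j m 0) i (s i) with hj'
    have hmi : m ∈ Finset.univ.erase i := Finset.mem_erase.mpr ⟨him.symm, Finset.mem_univ m⟩
    have him' : i ∈ Finset.univ.erase m := Finset.mem_erase.mpr ⟨him, Finset.mem_univ i⟩
    have hE : (Finset.univ.erase i).erase m = (Finset.univ.erase m).erase i := by
      ext x; simp only [Finset.mem_erase, Finset.mem_univ, and_true]; tauto
    have hj'E : ∀ k ∈ (Finset.univ.erase m).erase i, j' k = j k := by
      intro k hk
      have hki : k ≠ i := (Finset.mem_erase.mp hk).1
      have hkm : k ≠ m := (Finset.mem_erase.mp (Finset.mem_erase.mp hk).2).1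
      rw [hj', Function.update_of_ne hki, Function.update_of_ne hkm]
    have hj'i : j' i = s i := by rw [hj', Function.update_self]
    -- sums
    have hsum1 : ∑ k ∈ Finset.univ.erase i, j k
        = s m + ∑ k ∈ (Finset.univ.erase m).erase i, j k := by
      rw [← Finset.add_sum_erase _ _ hmi, h3, hE]
    have hsum2 : ∑ k ∈ Finset.univ.erase m, j' k
        = s i + ∑ k ∈ (Finset.univ.erase m).erase i, j k := by
      rw [← Finset.add_sum_erase _ _ him', hj'i]
      congr 1
      exact Finset.sum_congr rfl hj'E
    -- products (of factorials)
    have hprod1 : ∏ k ∈ Finset.univ.erase i, ((j k).factorial : ℂ)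
        = ((s m).factorial : ℂ) * ∏ k ∈ (Finset.univ.erase m).erase i, ((j k).factorial : ℂ) := by
      rw [← Finset.mul_prod_erase _ _ hmi, h3, hE]
    have hprod2 : ∏ k ∈ Finset.univ.erase m, ((j' k).factorial : ℂ)
        = ((s i).factorial : ℂ) * ∏ k ∈ (Finset.univ.erase m).erase i, ((j k).factorial : ℂ) := by
      rw [← Finset.mul_prod_erase _ _ him', hj'i]
      congr 1
      exact Finset.prod_congr rfl fun k hk => by rw [hj'E k hk]
    -- monomials
    have hw1 : w z (Finset.univ.erase i) j
        = z m ^ s m * ∏ k ∈ (Finset.univ.erase m).erase i, z k ^ j k := by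
      rw [w, ← Finset.mul_prod_erase _ _ hmi, h3, hE]
    have hw2 : w z (Finset.univ.erase m) j'
        = z i ^ s i * ∏ k ∈ (Finset.univ.erase m).erase i, z k ^ j k := by
      rw [w, ← Finset.mul_prod_erase _ _ him', hj'i]
      congr 1
      exact Finset.prod_congr rfl fun k hk => by rw [hj'E k hk]
    have hc1 : c (s i) (Finset.univ.erase i) j
        = ((s i + (s m + ∑ k ∈ (Finset.univ.erase m).erase i, j k)).factorial : ℂ)
            / (((s i).factorial : ℂ) * (((s m).factorial : ℂ)
              * ∏ k ∈ (Finset.univ.erase m).erase i, ((j k).factorial : ℂ))) := by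
      rw [show c (s i) (Finset.univ.erase i) j
          = ((s i + ∑ k ∈ Finset.univ.erase i, j k).factorial : ℂ)
            / (((s i).factorial : ℂ) * ∏ k ∈ Finset.univ.erase i, ((j k).factorial : ℂ)) from rfl,
        hsum1, hprod1]
    have hc2 : c (s m) (Finset.univ.erase m) j'
        = ((s m + (s i + ∑ k ∈ (Finset.univ.erase m).erase i, j k)).factorial : ℂ)
            / (((s m).factorial : ℂ) * (((s i).factorial : ℂ)
              * ∏ k ∈ (Finset.univ.erase m).erase i, ((j k).factorial : ℂ))) := by
      rw [show c (s m) (Finset.univ.erase m) j'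
          = ((s m + ∑ k ∈ Finset.univ.erase m, j' k).factorial : ℂ)
            / (((s m).factorial : ℂ) * ∏ k ∈ Finset.univ.erase m, ((j' k).factorial : ℂ)) from rfl,
        hsum2, hprod2]
    have hcc : c (s i) (Finset.univ.erase i) j = c (s m) (Finset.univ.erase m) j' := by
      rw [hc1, hc2, show s i + (s m + ∑ k ∈ (Finset.univ.erase m).erase i, j k)
          = s m + (s i + ∑ k ∈ (Finset.univ.erase m).erase i, j k) by ring]
      ring
    rw [hcc, hw1, hw2]
    ring
end ZK

namespace ZK
variable {n : ℕ} (z : Fin n → ℂ) (s : Fin n → ℕ)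

noncomputable def F : ℂ :=
  ∑ i, z i ^ (s i + 1) *
    ∑ j ∈ Box s i, c (s i) (Finset.univ.erase i) j * w z (Finset.univ.erase i) j

lemma step (hz : ∑ i, z i = 1) (m : Fin n) (hm : 1 ≤ s m) :
    F z s = F z (Function.update s m (s m - 1)) := by
  set s' := Function.update s m (s m - 1) with hs'
  set t := s m - 1 with ht
  have hsm : s m = t + 1 := by omega
  have hs'm : s' m = t := by rw [hs', Function.update_self]
  rw [F, F, ← Finset.add_sum_erase _ _ (Finset.mem_univ m),
    ← Finset.add_sum_erase _ _ (Finset.mem_univ m)]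
  -- the m-th term of F z s
  have hAm : z m ^ (s m + 1) *
      ∑ j ∈ Box s m, c (s m) (Finset.univ.erase m) j * w z (Finset.univ.erase m) j
      = z m ^ (t + 1) * (z m * G z s (t + 1) m) := by
    rw [G, hsm, pow_succ]; ring
  -- the m-th term of F z s'
  have hAm' : z m ^ (s' m + 1) *
      ∑ j ∈ Box s' m, c (s' m) (Finset.univ.erase m) j * w z (Finset.univ.erase m) j
      = z m ^ (t + 1) * G z s t m := by
    rw [G, hs'm, hs', Box_update]
  -- the i-th terms for i ≠ m
  have hterm : ∀ i ∈ Finset.univ.erase m,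
      z i ^ (s i + 1) *
        ∑ j ∈ Box s i, c (s i) (Finset.univ.erase i) j * w z (Finset.univ.erase i) j
      = (z i ^ (s' i + 1) *
          ∑ j ∈ Box s' i, c (s' i) (Finset.univ.erase i) j * w z (Finset.univ.erase i) j)
        + z m ^ (t + 1) * (z i * S z s i (t + 1) m) := by
    intro i hi
    have him : i ≠ m := (Finset.mem_erase.mp hi).1
    have hs'i : s' i = s i := by rw [hs', Function.update_of_ne him]
    have hbne : Box (Function.update s m t) i = (Box s i).filter (fun j => ¬ j m = s m) := by
      rw [ht]; exact Box_update_ne s m i him hm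
    rw [hs'i, hs', hbne]
    rw [← Finset.sum_filter_add_sum_filter_not (Box s i) (fun j => j m = s m)
      (fun j => c (s i) (Finset.univ.erase i) j * w z (Finset.univ.erase i) j)]
    rw [mul_add, cross z s m i him, S, ← hsm]
    ring
  rw [hAm, hAm', Finset.sum_congr rfl hterm, Finset.sum_add_distrib]
  rw [star z s hz m t]
  rw [show ∑ i ∈ Finset.univ.erase m, z m ^ (t + 1) * (z i * S z s i (t + 1) m)
      = z m ^ (t + 1) * ∑ i ∈ Finset.univ.erase m, z i * S z s i (t + 1) m by
    rw [Finset.mul_sum]]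
  ring

lemma base (hz : ∑ i, z i = 1) (h : ∀ i, s i = 0) : F z s = 1 := by
  rw [F]
  have hbox : ∀ i : Fin n, Box s i = {fun _ => 0} := by
    intro i
    ext j
    simp only [mem_Box, Finset.mem_singleton, h]
    constructor
    · rintro ⟨h1, -⟩
      funext k
      exact Nat.le_zero.mp (h1 k)
    · rintro rfl
      exact ⟨fun _ => le_refl 0, rfl⟩
  have : ∀ i : Fin n, z i ^ (s i + 1) *
      ∑ j ∈ Box s i, c (s i) (Finset.univ.erase i) j * w z (Finset.univ.erase i) j = z i := by
    intro i
    rw [hbox i, Finset.sum_singleton, h i]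
    rw [show c 0 (Finset.univ.erase i) (fun _ => 0)
        = ((0 + ∑ _k ∈ Finset.univ.erase i, 0).factorial : ℂ)
          / ((Nat.factorial 0 : ℂ) * ∏ _k ∈ Finset.univ.erase i, ((Nat.factorial 0 : ℂ))) from rfl]
    rw [w]
    simp [Nat.factorial]
  rw [Finset.sum_congr rfl fun i _ => this i]
  exact hz

lemma main (hz : ∑ i, z i = 1) : F z s = 1 := by
  suffices H : ∀ N (s : Fin n → ℕ), (∑ i, s i) = N → F z s = 1 from H _ s rfl
  intro N
  induction N with
  | zero =>
    intro s hs
    refine base z s hz fun i => ?_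
    have := Finset.sum_eq_zero_iff.mp hs
    exact this i (Finset.mem_univ i)
  | succ N ih =>
    intro s hs
    obtain ⟨m, -, hm⟩ : ∃ m ∈ Finset.univ, s m ≠ 0 := by
      apply Finset.exists_ne_zero_of_sum_ne_zero
      rw [hs]; omega
    rw [step z s hz m (Nat.one_le_iff_ne_zero.mpr hm)]
    apply ih
    rw [Finset.sum_update_of_mem (Finset.mem_univ m), ← Finset.erase_eq]
    have h2 := Finset.add_sum_erase Finset.univ s (Finset.mem_univ m)
    omega

end ZK



/-- The paper's Theorem (K2): if `z₁ + ⋯ + z_n = 1`, then for any natural numbers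
`s₁, …, s_n`, `Σ_i z_i^{s_i+1} Σ_{0 ≤ j_k ≤ s_k, k ≠ i} multinomial · ∏_{k≠i} z_k^{j_k} = 1`.
Tuples `(j_k)_{k≠i}` are encoded as functions `j : Fin n → ℕ` with `j i = 0`. -/
theorem zeilberger_krivokolesko_identity (n : ℕ) (hn : 1 ≤ n) (z : Fin n → ℂ)
    (s : Fin n → ℕ) (hz : ∑ i, z i = 1) :
    ∑ i, z i ^ (s i + 1) *
      ∑ j ∈ (Fintype.piFinset fun k => Finset.range (s k + 1)).filter (fun j => j i = 0),
        (((s i + ∑ k ∈ Finset.univ.erase i, j k).factorial : ℂ) /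
            (((s i).factorial : ℂ) * ∏ k ∈ Finset.univ.erase i, ((j k).factorial : ℂ))) *
          ∏ k ∈ Finset.univ.erase i, z k ^ j k = 1 := by
  exact ZK.main z s hz
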